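/- With S = {0, 1, 3} ⊆ ℤ, the Cayley poset P(ℤ, S) is a Cayley representation of ℤ: every order automorphism of P(ℤ, S) is translation by an integer. -/

import Mathlib

variable {G : Type*}

/-- The order relation of the (additive) Cayley poset `P(G,S)`: the underlying set is
the disjoint union of two copies of `G` (`Sum.inl g` written `g`, `Sum.inr h` written
`h'`), with `g < h'` iff `h - g ∈ S`, and no other distinct elements comparable. -/
def addCayleyLE [AddGroup G] (S : Set G) : G ⊕ G → G ⊕ G → Prop
  | Sum.inl g, Sum.inl h => g = h
  | Sum.inl g, Sum.inr h => h - g ∈ S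
  | Sum.inr _, Sum.inl _ => False
  | Sum.inr g, Sum.inr h => g = h

/-- The additive Cayley poset `P(G,S)` as a type synonym for `G ⊕ G`. -/
def AddCayleyPoset (G : Type*) [AddGroup G] (S : Set G) : Type _ := G ⊕ G

instance [AddGroup G] (S : Set G) : PartialOrder (AddCayleyPoset G S) where
  le x y := addCayleyLE S x y
  le_refl x := by cases x <;> exact rfl
  le_trans x y z hxy hyz := by
    cases x <;> cases y <;> cases z <;> simp_all [addCayleyLE]
  le_antisymm x y hxy hyx := by
    cases x <;> cases y <;> simp_all [addCayleyLE] <;> (subst hxy; rfl)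

/-- The translation `L(g)` on `P(G,S)`: `h ↦ g + h` on minimal points and
`h' ↦ (g + h)'` on maximal points. -/
def addCayleyL [AddGroup G] (g : G) : G ⊕ G → G ⊕ G
  | Sum.inl h => Sum.inl (g + h)
  | Sum.inr h => Sum.inr (g + h)

/-- `P(G,S)` is a Cayley representation of the additive group `G` if every order
automorphism of the Cayley poset `P(G,S)` is a translation. -/
def IsAddCayleyRep (G : Type*) [AddGroup G] (S : Set G) : Prop :=
  ∀ φ : AddCayleyPoset G S ≃o AddCayleyPoset G S,
    ∃ g : G, ∀ p : AddCayleyPoset G S, φ p = addCayleyL g p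

set_option maxHeartbeats 4000000 in
theorem int_cayleyRep_boot (a b : ℤ → ℤ) (ha : Function.Injective a) (hb : Function.Injective b)
    (P : ∀ g h : ℤ, (h - g = 0 ∨ h - g = 1 ∨ h - g = 3) ↔ (b h - a g = 0 ∨ b h - a g = 1 ∨ b h - a g = 3))
    (h0 : a 0 = 0) :
    a (-2) = -2 ∧ a (-1) = -1 ∧ b (-2) = -2 ∧ b (-1) = -1 ∧ b 0 = 0 := by
  have n2 : b (0) = 0 ∨ b (0) = 1 ∨ b (0) = 3 := by have hp := P (0:ℤ) (0:ℤ); omega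
  have n3 : b (1) = 0 ∨ b (1) = 1 ∨ b (1) = 3 := by clear n2; have hp := P (0:ℤ) (1:ℤ); omega
  have n4 : b (3) = 0 ∨ b (3) = 1 ∨ b (3) = 3 := by clear n2 n3; have hp := P (0:ℤ) (3:ℤ); omega
  have n5 : a (1) = -3 ∨ a (1) = -2 ∨ a (1) = -1 ∨ a (1) = 0 ∨ a (1) = 1 ∨ a (1) = 2 ∨ a (1) = 3 := by clear h0 n2 n4; have hp := P (1:ℤ) (1:ℤ); omega
  have n6 : b (2) = -3 ∨ b (2) = -2 ∨ b (2) = -1 ∨ b (2) = 0 ∨ b (2) = 1 ∨ b (2) = 2 ∨ b (2) = 3 ∨ b (2) = 4 ∨ b (2) = 5 ∨ b (2) = 6 := by clear h0 n2 n3 n4; have hp := P (1:ℤ) (2:ℤ); omega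
  have n7 : a (1) = -3 ∨ a (1) = -2 ∨ a (1) = -1 ∨ a (1) = 1 ∨ a (1) = 2 ∨ a (1) = 3 := by clear h0 n2 n3 n6; have hp := P (1:ℤ) (3:ℤ); omega
  clear n5
  have n8 : a (2) = -6 ∨ a (2) = -5 ∨ a (2) = -4 ∨ a (2) = -3 ∨ a (2) = -2 ∨ a (2) = -1 ∨ a (2) = 0 ∨ a (2) = 1 ∨ a (2) = 2 ∨ a (2) = 3 ∨ a (2) = 4 ∨ a (2) = 5 ∨ a (2) = 6 := by clear h0 n2 n3 n4 n7; have hp := P (2:ℤ) (2:ℤ); omega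
  have n9 : a (2) = -3 ∨ a (2) = -2 ∨ a (2) = -1 ∨ a (2) = 0 ∨ a (2) = 1 ∨ a (2) = 2 ∨ a (2) = 3 := by clear h0 n2 n3 n7 n6; have hp := P (2:ℤ) (3:ℤ); omega
  clear n8
  have n11 : a (2) = -3 ∨ a (2) = -2 ∨ a (2) = -1 ∨ a (2) = 1 ∨ a (2) = 2 ∨ a (2) = 3 := by clear n2 n3 n4 n7 n6; have hne0 : a (2) ≠ a (0) := fun hh => absurd (ha hh) (by omega); omega
  clear n9
  have n13 : a (-3) = -3 ∨ a (-3) = -2 ∨ a (-3) = -1 ∨ a (-3) = 0 ∨ a (-3) = 1 ∨ a (-3) = 2 ∨ a (-3) = 3 := by clear h0 n3 n4 n7 n6 n11; have hp := P (-3:ℤ) (0:ℤ); omega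
  have n14 : a (-3) = -3 ∨ a (-3) = -2 ∨ a (-3) = -1 ∨ a (-3) = 1 ∨ a (-3) = 2 ∨ a (-3) = 3 := by clear h0 n2 n4 n7 n6 n11; have hp := P (-3:ℤ) (1:ℤ); omega
  clear n13
  have n15 : a (-2) = -3 ∨ a (-2) = -2 ∨ a (-2) = -1 ∨ a (-2) = 0 ∨ a (-2) = 1 ∨ a (-2) = 2 ∨ a (-2) = 3 := by clear h0 n2 n4 n7 n6 n11 n14; have hp := P (-2:ℤ) (1:ℤ); omega
  have n16 : a (-2) = -3 ∨ a (-2) = -2 ∨ a (-2) = -1 ∨ a (-2) = 1 ∨ a (-2) = 2 ∨ a (-2) = 3 := by clear h0 n2 n3 n7 n6 n11 n14; have hp := P (-2:ℤ) (3:ℤ); omega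
  clear n15
  have n17 : a (-1) = -3 ∨ a (-1) = -2 ∨ a (-1) = -1 ∨ a (-1) = 0 ∨ a (-1) = 1 ∨ a (-1) = 2 ∨ a (-1) = 3 := by clear h0 n3 n4 n7 n6 n11 n14 n16; have hp := P (-1:ℤ) (0:ℤ); omega
  have n18 : a (-1) = -3 ∨ a (-1) = -2 ∨ a (-1) = -1 ∨ a (-1) = 1 ∨ a (-1) = 2 ∨ a (-1) = 3 := by clear h0 n2 n4 n7 n6 n11 n14 n16; have hp := P (-1:ℤ) (1:ℤ); omega
  clear n17
  have n19 : b (2) = -3 ∨ b (2) = -2 ∨ b (2) = -1 ∨ b (2) = 2 ∨ b (2) = 4 ∨ b (2) = 5 ∨ b (2) = 6 := by clear n2 n3 n4 n7 n11 n14 n16 n18; have hp := P (0:ℤ) (2:ℤ); omega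
  clear n6
  have n21 : b (-2) = -3 ∨ b (-2) = -2 ∨ b (-2) = -1 ∨ b (-2) = 0 ∨ b (-2) = 1 ∨ b (-2) = 2 ∨ b (-2) = 3 ∨ b (-2) = 4 ∨ b (-2) = 5 ∨ b (-2) = 6 := by clear h0 n2 n3 n4 n7 n19 n11 n16 n18; have hp := P (-3:ℤ) (-2:ℤ); omega
  have n22 : b (-1) = -3 ∨ b (-1) = -2 ∨ b (-1) = -1 ∨ b (-1) = 0 ∨ b (-1) = 1 ∨ b (-1) = 2 ∨ b (-1) = 3 ∨ b (-1) = 4 ∨ b (-1) = 5 ∨ b (-1) = 6 := by clear h0 n2 n3 n4 n7 n19 n11 n14 n18 n21; have hp := P (-2:ℤ) (-1:ℤ); omega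
  have n24 : b (-2) = -3 ∨ b (-2) = -2 ∨ b (-2) = -1 ∨ b (-2) = 2 ∨ b (-2) = 4 ∨ b (-2) = 5 ∨ b (-2) = 6 := by clear n2 n3 n4 n7 n19 n11 n14 n16 n18 n22; have hp := P (0:ℤ) (-2:ℤ); omega
  clear n21
  have n25 : b (-1) = -3 ∨ b (-1) = -2 ∨ b (-1) = -1 ∨ b (-1) = 2 ∨ b (-1) = 4 ∨ b (-1) = 5 ∨ b (-1) = 6 := by clear n2 n3 n4 n7 n19 n11 n14 n16 n18 n24; have hp := P (0:ℤ) (-1:ℤ); omega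
  clear n22
  rcases n2 with n26 | n70 | n121
  ·
    have n27 : a (-3) = -3 ∨ a (-3) = -1 := by clear h0 n3 n4 n7 n19 n11 n16 n18 n24 n25; have hp := P (-3:ℤ) (0:ℤ); omega
    clear n14
    have n28 : b (1) = 1 ∨ b (1) = 3 := by clear h0 n26 n4 n7 n19 n11 n16 n18 n24 n25; have hp := P (-3:ℤ) (1:ℤ); omega
    clear n3
    have n30 : a (-2) = -2 ∨ a (-2) = 1 ∨ a (-2) = 2 ∨ a (-2) = 3 := by clear h0 n28 n4 n7 n19 n11 n27 n18 n24 n25; have hp := P (-2:ℤ) (0:ℤ); omega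
    clear n16
    have n31 : a (-1) = -3 ∨ a (-1) = -1 := by clear h0 n28 n4 n7 n19 n11 n27 n30 n24 n25; have hp := P (-1:ℤ) (0:ℤ); omega
    clear n18
    have n32 : b (2) = -3 ∨ b (2) = -2 ∨ b (2) = -1 ∨ b (2) = 2 := by clear h0 n26 n28 n4 n7 n11 n27 n30 n24 n25; have hp := P (-1:ℤ) (2:ℤ); omega
    clear n19
    have n33 : a (1) = -2 ∨ a (1) = 1 ∨ a (1) = 2 ∨ a (1) = 3 := by clear h0 n28 n4 n32 n11 n27 n30 n31 n24 n25; have hp := P (1:ℤ) (0:ℤ); omega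
    clear n7
    have n34 : b (2) = -2 ∨ b (2) = -1 ∨ b (2) = 2 := by clear h0 n26 n28 n4 n11 n27 n30 n31 n24 n25; have hp := P (1:ℤ) (2:ℤ); omega
    clear n32
    have n35 : a (1) = -2 ∨ a (1) = 1 ∨ a (1) = 2 := by clear h0 n26 n28 n4 n11 n27 n30 n31 n24 n25; have hp := P (1:ℤ) (2:ℤ); omega
    clear n33
    have n36 : a (2) = -2 ∨ a (2) = 1 ∨ a (2) = 2 ∨ a (2) = 3 := by clear h0 n28 n4 n35 n34 n27 n30 n31 n24 n25; have hp := P (2:ℤ) (0:ℤ); omega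
    clear n11
    have n37 : a (2) = -2 ∨ a (2) = 1 ∨ a (2) = 2 := by clear h0 n26 n28 n4 n35 n27 n30 n31 n24 n25; have hp := P (2:ℤ) (2:ℤ); omega
    clear n36
    have n40 : b (-2) = -3 ∨ b (-2) = -2 ∨ b (-2) = -1 ∨ b (-2) = 2 := by clear h0 n26 n28 n4 n35 n34 n37 n30 n31 n25; have hp := P (-3:ℤ) (-2:ℤ); omega
    clear n24
    have n41 : b (-2) = -2 ∨ b (-2) = -1 ∨ b (-2) = 2 := by clear h0 n26 n28 n4 n35 n34 n37 n27 n31 n25; have hp := P (-2:ℤ) (-2:ℤ); omega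
    clear n40
    have n42 : a (-2) = -2 ∨ a (-2) = 1 ∨ a (-2) = 2 := by clear h0 n26 n28 n4 n35 n34 n37 n27 n31 n25; have hp := P (-2:ℤ) (-2:ℤ); omega
    clear n30
    have n43 : b (-1) = -2 ∨ b (-1) = -1 ∨ b (-1) = 2 ∨ b (-1) = 4 ∨ b (-1) = 5 := by clear h0 n26 n28 n4 n35 n34 n37 n27 n31 n41; have hp := P (-2:ℤ) (-1:ℤ); omega
    clear n25
    have n44 : b (-1) = -2 ∨ b (-1) = -1 ∨ b (-1) = 2 := by clear h0 n26 n28 n4 n35 n34 n37 n27 n42 n41; have hp := P (-1:ℤ) (-1:ℤ); omega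
    clear n43
    rcases n28 with n45 | n64
    ·
      have n46 : a (-2) = -2 ∨ a (-2) = 1 := by clear h0 n26 n4 n35 n34 n37 n27 n31 n41 n44; have hp := P (-2:ℤ) (1:ℤ); omega
      clear n42
      have n49 : a (2) = 2 := by clear h0 n26 n4 n35 n34 n27 n46 n31 n41 n44; have hp := P (2:ℤ) (1:ℤ); omega
      clear n37
      have n50 : b (2) = 2 := by clear h0 n26 n45 n4 n35 n27 n46 n31 n41 n44; have hp := P (2:ℤ) (2:ℤ); omega
      clear n34
      have n54 : b (-2) = -2 ∨ b (-2) = -1 := by clear h0 n26 n45 n4 n35 n49 n27 n46 n31 n44; have hne0 : b (-2) ≠ b (2) := fun hh => absurd (hb hh) (by omega); omega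
      clear n41
      have n55 : b (-1) = -2 ∨ b (-1) = -1 := by clear h0 n26 n45 n4 n35 n49 n27 n46 n31 n54; have hne0 : b (-1) ≠ b (2) := fun hh => absurd (hb hh) (by omega); omega
      clear n44
      have n56 : a (-3) = -3 := by clear h0 n26 n45 n4 n35 n49 n46 n31 n54 n55; have hp := P (-3:ℤ) (2:ℤ); omega
      clear n27
      have n57 : a (-2) = -2 := by clear h0 n26 n45 n4 n35 n50 n49 n56 n31 n55; have hp := P (-2:ℤ) (-2:ℤ); omega
      clear n46
      have n58 : a (-1) = -1 := by clear h0 n26 n45 n4 n35 n49 n56 n57 n54 n55; have hp := P (-1:ℤ) (2:ℤ); omega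
      clear n31
      have n61 : b (-2) = -2 := by clear h0 n26 n45 n4 n35 n50 n49 n57 n58 n55; have hp := P (-3:ℤ) (-2:ℤ); omega
      clear n54
      have n62 : b (-1) = -1 := by clear h0 n26 n45 n4 n35 n50 n49 n57 n58 n61; have hp := P (-3:ℤ) (-1:ℤ); omega
      clear n55
      omega
    ·
      have n65 : a (-2) = 2 := by clear h0 n26 n4 n35 n34 n37 n27 n31 n41 n44; have hp := P (-2:ℤ) (1:ℤ); omega
      clear n42
      have n66 : b (2) = -2 ∨ b (2) = -1 := by clear h0 n26 n64 n4 n35 n37 n27 n31 n41 n44; have hp := P (-2:ℤ) (2:ℤ); omega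
      clear n34
      have n68 : a (1) = 2 := by clear h0 n26 n4 n66 n37 n27 n65 n31 n41 n44; have hp := P (1:ℤ) (1:ℤ); omega
      clear n35
      exact absurd rfl (by clear h0 n26 n64 n4 n37 n27 n65 n31 n41 n44; have hp := P (1:ℤ) (2:ℤ); omega : ¬ (0:ℤ) = 0)
  ·
    have n71 : a (-3) = -2 ∨ a (-3) = 1 := by clear h0 n3 n4 n7 n19 n11 n16 n18 n24 n25; have hp := P (-3:ℤ) (0:ℤ); omega
    clear n14
    have n72 : b (1) = 0 ∨ b (1) = 3 := by clear h0 n70 n4 n7 n19 n11 n16 n18 n24 n25; have hp := P (-3:ℤ) (1:ℤ); omega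
    clear n3
    have n74 : a (-2) = -3 ∨ a (-2) = -1 ∨ a (-2) = 2 ∨ a (-2) = 3 := by clear h0 n72 n4 n7 n19 n11 n71 n18 n24 n25; have hp := P (-2:ℤ) (0:ℤ); omega
    clear n16
    have n75 : a (-1) = -2 ∨ a (-1) = 1 := by clear h0 n72 n4 n7 n19 n11 n71 n74 n24 n25; have hp := P (-1:ℤ) (0:ℤ); omega
    clear n18
    have n76 : b (2) = -2 ∨ b (2) = -1 ∨ b (2) = 2 ∨ b (2) = 4 := by clear h0 n70 n72 n4 n7 n11 n71 n74 n24 n25; have hp := P (-1:ℤ) (2:ℤ); omega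
    clear n19
    have n77 : a (1) = -3 ∨ a (1) = -1 ∨ a (1) = 2 ∨ a (1) = 3 := by clear h0 n72 n4 n76 n11 n71 n74 n75 n24 n25; have hp := P (1:ℤ) (0:ℤ); omega
    clear n7
    have n78 : a (2) = -3 ∨ a (2) = -1 ∨ a (2) = 2 ∨ a (2) = 3 := by clear h0 n72 n4 n77 n76 n71 n74 n75 n24 n25; have hp := P (2:ℤ) (0:ℤ); omega
    clear n11
    have n81 : b (-2) = -2 ∨ b (-2) = -1 ∨ b (-2) = 2 ∨ b (-2) = 4 := by clear h0 n70 n72 n4 n77 n76 n78 n74 n75 n25; have hp := P (-3:ℤ) (-2:ℤ); omega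
    clear n24
    have n82 : b (-1) = -2 ∨ b (-1) = -1 ∨ b (-1) = 2 ∨ b (-1) = 4 := by clear h0 n70 n72 n4 n77 n76 n78 n71 n74 n81; have hp := P (-1:ℤ) (-1:ℤ); omega
    clear n25
    rcases n72 with n83 | n102
    ·
      have n84 : a (-2) = -3 ∨ a (-2) = -1 := by clear h0 n70 n4 n77 n76 n78 n71 n75 n81 n82; have hp := P (-2:ℤ) (1:ℤ); omega
      clear n74
      have n86 : a (1) = -3 ∨ a (1) = -1 := by clear h0 n70 n4 n76 n78 n71 n84 n75 n81 n82; have hp := P (1:ℤ) (1:ℤ); omega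
      clear n77
      have n87 : b (2) = -2 ∨ b (2) = -1 ∨ b (2) = 2 := by clear h0 n70 n83 n4 n78 n71 n84 n75 n81 n82; have hp := P (1:ℤ) (2:ℤ); omega
      clear n76
      have n88 : a (2) = 2 ∨ a (2) = 3 := by clear h0 n70 n4 n86 n87 n71 n84 n75 n81 n82; have hp := P (2:ℤ) (1:ℤ); omega
      clear n78
      have n89 : b (2) = 2 := by clear h0 n70 n83 n4 n86 n71 n84 n75 n81 n82; have hp := P (2:ℤ) (2:ℤ); omega
      clear n87
      have n94 : b (-2) = -2 ∨ b (-2) = -1 ∨ b (-2) = 4 := by clear h0 n70 n83 n4 n86 n88 n71 n84 n75 n82; have hne0 : b (-2) ≠ b (2) := fun hh => absurd (hb hh) (by omega); omega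
      clear n81
      have n95 : b (-1) = -2 ∨ b (-1) = -1 ∨ b (-1) = 4 := by clear h0 n70 n83 n4 n86 n88 n71 n84 n75 n94; have hne0 : b (-1) ≠ b (2) := fun hh => absurd (hb hh) (by omega); omega
      clear n82
      have n97 : b (-2) = -2 ∨ b (-2) = -1 := by clear h0 n70 n83 n4 n86 n89 n88 n71 n75 n95; have hp := P (-2:ℤ) (-2:ℤ); omega
      clear n94
      have n98 : b (-1) = -2 ∨ b (-1) = -1 := by clear h0 n70 n83 n4 n86 n89 n88 n71 n75 n97; have hp := P (-2:ℤ) (-1:ℤ); omega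
      clear n95
      have n100 : a (-1) = 1 := by clear h0 n70 n83 n4 n86 n89 n88 n71 n84 n98; have hp := P (-1:ℤ) (-2:ℤ); omega
      clear n75
      exact absurd rfl (by clear h0 n70 n83 n4 n86 n89 n88 n71 n84 n97; have hp := P (-1:ℤ) (-1:ℤ); omega : ¬ (0:ℤ) = 0)
    ·
      have n103 : a (-2) = 2 ∨ a (-2) = 3 := by clear h0 n70 n4 n77 n76 n78 n71 n75 n81 n82; have hp := P (-2:ℤ) (1:ℤ); omega
      clear n74
      have n105 : a (1) = 2 ∨ a (1) = 3 := by clear h0 n70 n4 n76 n78 n71 n103 n75 n81 n82; have hp := P (1:ℤ) (1:ℤ); omega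
      clear n77
      have n106 : b (2) = 2 ∨ b (2) = 4 := by clear h0 n70 n102 n4 n78 n71 n103 n75 n81 n82; have hp := P (1:ℤ) (2:ℤ); omega
      clear n76
      have n107 : a (2) = -3 ∨ a (2) = -1 := by clear h0 n70 n4 n105 n106 n71 n103 n75 n81 n82; have hp := P (2:ℤ) (1:ℤ); omega
      clear n78
      have n108 : b (2) = 2 := by clear h0 n70 n102 n4 n105 n71 n103 n75 n81 n82; have hp := P (2:ℤ) (2:ℤ); omega
      clear n106
      have n113 : b (-2) = -2 ∨ b (-2) = -1 ∨ b (-2) = 4 := by clear h0 n70 n102 n4 n105 n107 n71 n103 n75 n82; have hne0 : b (-2) ≠ b (2) := fun hh => absurd (hb hh) (by omega); omega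
      clear n81
      have n114 : b (-1) = -2 ∨ b (-1) = -1 ∨ b (-1) = 4 := by clear h0 n70 n102 n4 n105 n107 n71 n103 n75 n113; have hne0 : b (-1) ≠ b (2) := fun hh => absurd (hb hh) (by omega); omega
      clear n82
      have n116 : b (-2) = 4 := by clear h0 n70 n102 n4 n105 n108 n107 n71 n75 n114; have hp := P (-2:ℤ) (-2:ℤ); omega
      clear n113
      have n117 : a (-2) = 3 := by clear h0 n70 n102 n4 n105 n108 n107 n71 n75 n114; have hp := P (-2:ℤ) (-2:ℤ); omega
      clear n103
      have n118 : b (-1) = 4 := by clear h0 n70 n102 n4 n105 n108 n107 n71 n75 n116; have hp := P (-2:ℤ) (-1:ℤ); omega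
      clear n114
      have n119 : a (-1) = -2 := by clear h0 n70 n102 n4 n105 n108 n107 n71 n117 n118; have hp := P (-1:ℤ) (-2:ℤ); omega
      clear n75
      exact absurd rfl (by clear h0 n70 n102 n4 n105 n108 n107 n71 n117 n116; have hp := P (-1:ℤ) (-1:ℤ); omega : ¬ (0:ℤ) = 0)
  ·
    have n122 : a (-3) = 2 ∨ a (-3) = 3 := by clear h0 n3 n4 n7 n19 n11 n16 n18 n24 n25; have hp := P (-3:ℤ) (0:ℤ); omega
    clear n14
    have n125 : a (-2) = -3 ∨ a (-2) = -2 ∨ a (-2) = -1 ∨ a (-2) = 1 := by clear h0 n3 n4 n7 n19 n11 n122 n18 n24 n25; have hp := P (-2:ℤ) (0:ℤ); omega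
    clear n16
    have n126 : a (-1) = 2 ∨ a (-1) = 3 := by clear h0 n3 n4 n7 n19 n11 n122 n125 n24 n25; have hp := P (-1:ℤ) (0:ℤ); omega
    clear n18
    have n127 : b (2) = 2 ∨ b (2) = 4 ∨ b (2) = 5 ∨ b (2) = 6 := by clear h0 n121 n3 n4 n7 n11 n122 n125 n24 n25; have hp := P (-1:ℤ) (2:ℤ); omega
    clear n19
    have n128 : a (1) = -3 ∨ a (1) = -2 ∨ a (1) = -1 ∨ a (1) = 1 := by clear h0 n3 n4 n127 n11 n122 n125 n126 n24 n25; have hp := P (1:ℤ) (0:ℤ); omega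
    clear n7
    have n129 : b (2) = 2 ∨ b (2) = 4 := by clear h0 n121 n3 n4 n11 n122 n125 n126 n24 n25; have hp := P (1:ℤ) (2:ℤ); omega
    clear n127
    have n130 : a (1) = -1 ∨ a (1) = 1 := by clear h0 n121 n3 n4 n11 n122 n125 n126 n24 n25; have hp := P (1:ℤ) (2:ℤ); omega
    clear n128
    have n136 : b (-2) = 2 ∨ b (-2) = 4 ∨ b (-2) = 5 ∨ b (-2) = 6 := by clear h0 n121 n3 n4 n130 n129 n11 n125 n126 n25; have hp := P (-3:ℤ) (-2:ℤ); omega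
    clear n24
    have n137 : b (-2) = 2 ∨ b (-2) = 4 := by clear h0 n121 n3 n4 n130 n129 n11 n122 n126 n25; have hp := P (-2:ℤ) (-2:ℤ); omega
    clear n136
    have n138 : a (-2) = -1 ∨ a (-2) = 1 := by clear h0 n121 n3 n4 n130 n129 n11 n122 n126 n25; have hp := P (-2:ℤ) (-2:ℤ); omega
    clear n125
    have n140 : b (2) = 4 := by clear h0 n121 n3 n4 n130 n11 n122 n126 n137 n25; have hp := P (-2:ℤ) (2:ℤ); omega
    clear n129
    have n146 : b (-2) = 4 := by clear h0 n121 n3 n4 n140 n11 n122 n138 n126 n25; have hp := P (1:ℤ) (-2:ℤ); omega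
    clear n137
    have n147 : a (1) = -1 := by clear h0 n121 n3 n4 n140 n11 n122 n138 n126 n25; have hp := P (1:ℤ) (-2:ℤ); omega
    clear n130
    exact absurd rfl (by clear h0 n121 n3 n4 n11 n122 n138 n126 n146 n25; have hp := P (1:ℤ) (2:ℤ); omega : ¬ (0:ℤ) = 0)

theorem int_cayleyRep_arith (a b : ℤ → ℤ) (ha : Function.Injective a) (hb : Function.Injective b)
    (P : ∀ g h : ℤ, (h - g = 0 ∨ h - g = 1 ∨ h - g = 3) ↔ (b h - a g = 0 ∨ b h - a g = 1 ∨ b h - a g = 3))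
    (h0 : a 0 = 0) : ∀ k : ℤ, a k = k ∧ b k = k := by
  obtain ⟨e1, e2, e3, e4, e5⟩ := int_cayleyRep_boot a b ha hb P h0
  have fwd : ∀ n : ℕ, ∀ k : ℤ, -2 ≤ k → k ≤ n → a k = k ∧ b k = k := by
    intro n
    induction n with
    | zero =>
      intro k h1 h2
      have : k = -2 ∨ k = -1 ∨ k = 0 := by omega
      rcases this with rfl | rfl | rfl
      · exact ⟨e1, e3⟩
      · exact ⟨e2, e4⟩
      · exact ⟨h0, e5⟩
    | succ n ih =>
      intro k h1 h2
      rcases lt_or_ge k ((n : ℤ) + 1) with h | h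
      · exact ih k h1 (by omega)
      have hk : k = (n : ℤ) + 1 := by omega
      subst hk
      obtain ⟨han, -⟩ := ih n (by omega) (by omega)
      obtain ⟨han2, -⟩ := ih ((n : ℤ) - 2) (by omega) (by omega)
      have hb1 := P ((n : ℤ)) ((n : ℤ) + 1)
      have hb2 := P ((n : ℤ) - 2) ((n : ℤ) + 1)
      have hbval : b ((n : ℤ) + 1) = (n : ℤ) + 1 := by omega
      have ha1 := P ((n : ℤ) + 1) ((n : ℤ) + 1)
      have hne1 : a ((n : ℤ) + 1) ≠ a ((n : ℤ)) := fun hh => absurd (ha hh) (by omega)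
      have hne2 : a ((n : ℤ) + 1) ≠ a ((n : ℤ) - 2) := fun hh => absurd (ha hh) (by omega)
      exact ⟨by omega, hbval⟩
  have bwd : ∀ n : ℕ, ∀ k : ℤ, -(n : ℤ) - 2 ≤ k → k ≤ 0 → a k = k ∧ b k = k := by
    intro n
    induction n with
    | zero => exact fun k h1 h2 => fwd 0 k (by omega) (by omega)
    | succ n ih =>
      intro k h1 h2
      rcases le_or_gt (-(n : ℤ) - 2) k with h | h
      · exact ih k h h2
      have hk : k = -(n : ℤ) - 3 := by omega
      subst hk
      set m : ℤ := -(n : ℤ) - 2 with hm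
      obtain ⟨-, hbm⟩ := ih m (by omega) (by omega)
      obtain ⟨-, hbm2⟩ := ih (m + 2) (by omega) (by omega)
      have ha1 := P (m - 1) m
      have ha2 := P (m - 1) (m + 2)
      have haval : a (m - 1) = m - 1 := by omega
      have hb1 := P (m - 1) (m - 1)
      have hne1 : b (m - 1) ≠ b m := fun hh => absurd (hb hh) (by omega)
      have hne2 : b (m - 1) ≠ b (m + 2) := fun hh => absurd (hb hh) (by omega)
      have : m - 1 = -(n : ℤ) - 3 := by omega
      rw [this] at haval hb1 hne1 hne2 ha1 ha2
      exact ⟨haval, by omega⟩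
  intro k
  rcases le_or_gt 0 k with h | h
  · exact fwd k.toNat k (by omega) (by omega)
  · exact bwd (-k).toNat k (by omega) (by omega)

/-- Auxiliary: view an element of `ℤ ⊕ ℤ` as an element of the Cayley poset. -/
def cayPt (x : ℤ ⊕ ℤ) : AddCayleyPoset ℤ ({0, 1, 3} : Set ℤ) := x

/-- With `S = {0, 1, 3} ⊆ ℤ`, the Cayley poset `P(ℤ, S)` is a Cayley
representation of `ℤ`. -/
theorem int_cayleyRep : IsAddCayleyRep ℤ ({0, 1, 3} : Set ℤ) := by
  intro φ
  have lem : ∀ (ψ : AddCayleyPoset ℤ ({0, 1, 3} : Set ℤ) ≃o AddCayleyPoset ℤ ({0, 1, 3} : Set ℤ))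
      (g : ℤ), ∃ k, ψ (cayPt (Sum.inl g)) = cayPt (Sum.inl k) := by
    intro ψ g
    rcases hψ : ψ (cayPt (Sum.inl g)) with k | k
    · exact ⟨k, rfl⟩
    · exfalso
      have h1 : cayPt (Sum.inl g) ≤ cayPt (Sum.inr g) := by
        show g - g ∈ ({0, 1, 3} : Set ℤ)
        simp
      have h2 := ψ.monotone h1
      rw [hψ] at h2
      rcases hg : ψ (cayPt (Sum.inr g)) with m | m
      · rw [hg] at h2
        exact (h2 : addCayleyLE _ (Sum.inr k) (Sum.inl m))
      · rw [hg] at h2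
        have hkm : k = m := h2
        subst hkm
        have := ψ.injective (hψ.trans hg.symm)
        exact Sum.inl_ne_inr (show (Sum.inl g : ℤ ⊕ ℤ) = Sum.inr g from this)
  have lem2 : ∀ g : ℤ, ∃ k, φ (cayPt (Sum.inr g)) = cayPt (Sum.inr k) := by
    intro g
    rcases hg : φ (cayPt (Sum.inr g)) with k | k
    · exfalso
      obtain ⟨k', hk'⟩ := lem φ.symm k
      have hs : φ.symm (cayPt (Sum.inl k)) = cayPt (Sum.inr g) := by
        rw [← hg]; exact φ.symm_apply_apply _
      rw [hs] at hk'
      exact Sum.inr_ne_inl (show (Sum.inr g : ℤ ⊕ ℤ) = Sum.inl k' from hk')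
    · exact ⟨k, rfl⟩
  choose f hf using lem φ
  choose f' hf' using lem2
  have hfi : Function.Injective f := by
    intro x y hxy
    have h1 : φ (cayPt (Sum.inl x)) = φ (cayPt (Sum.inl y)) := by
      rw [hf x, hf y]
      exact congrArg (fun z => cayPt (Sum.inl z)) hxy
    have h2 := φ.injective h1
    exact Sum.inl.inj h2
  have hfi' : Function.Injective f' := by
    intro x y hxy
    have h1 : φ (cayPt (Sum.inr x)) = φ (cayPt (Sum.inr y)) := by
      rw [hf' x, hf' y]
      exact congrArg (fun z => cayPt (Sum.inr z)) hxy
    have h2 := φ.injective h1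
    exact Sum.inr.inj h2
  have key : ∀ g h : ℤ, (h - g ∈ ({0, 1, 3} : Set ℤ)) ↔ (f' h - f g ∈ ({0, 1, 3} : Set ℤ)) := by
    intro g h
    have h1 : (cayPt (Sum.inl g) ≤ cayPt (Sum.inr h)) ↔ (h - g ∈ ({0, 1, 3} : Set ℤ)) := Iff.rfl
    have h2 : (cayPt (Sum.inl (f g)) ≤ cayPt (Sum.inr (f' h))) ↔
        (f' h - f g ∈ ({0, 1, 3} : Set ℤ)) := Iff.rfl
    rw [← h1, ← h2, ← hf, ← hf']
    exact (φ.le_iff_le).symm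
  set c : ℤ := f 0 with hc
  have hA : Function.Injective (fun g => f g - c) := fun x y hxy => hfi (by simpa using hxy)
  have hB : Function.Injective (fun g => f' g - c) := fun x y hxy => hfi' (by simpa using hxy)
  have hP : ∀ g h : ℤ, (h - g = 0 ∨ h - g = 1 ∨ h - g = 3) ↔
      ((f' h - c) - (f g - c) = 0 ∨ (f' h - c) - (f g - c) = 1 ∨ (f' h - c) - (f g - c) = 3) := by
    intro g h
    have := key g h
    simp only [Set.mem_insert_iff, Set.mem_singleton_iff] at this
    constructor
    · intro hx; rcases this.1 hx with h' | h' | h' <;> omega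
    · intro hx
      have : f' h - f g = 0 ∨ f' h - f g = 1 ∨ f' h - f g = 3 := by omega
      rcases (key g h).2 (by simpa only [Set.mem_insert_iff, Set.mem_singleton_iff] using this)
        with h' | h' | h'
      all_goals simp only [Set.mem_insert_iff, Set.mem_singleton_iff] at *
      all_goals tauto
    
  have hmain := int_cayleyRep_arith (fun g => f g - c) (fun g => f' g - c) hA hB hP (by simp [hc])
  refine ⟨c, fun p => ?_⟩
  cases p with
  | inl h =>
    have h1 : f h = c + h := by have := (hmain h).1; omega
    rw [show (Sum.inl h : AddCayleyPoset ℤ ({0,1,3} : Set ℤ)) = cayPt (Sum.inl h) from rfl,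
      hf h, h1]
    rfl
  | inr h =>
    have h1 : f' h = c + h := by have := (hmain h).2; omega
    rw [show (Sum.inr h : AddCayleyPoset ℤ ({0,1,3} : Set ℤ)) = cayPt (Sum.inr h) from rfl,
      hf' h, h1]
    rfl
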